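/- For every a in A and x in V, one has Ω(xa − xa*) ≤ 2‖a − a*‖_A Ω(x). -/

import Mathlib

/-!
Setting: `A` is a C*-algebra and `V` is a Hilbert C*-module over `A`.
`WithCStarModule (A × V)` is the Hilbert `A`-module `A ⊕ V`, with inner product
`⟪(a, y), (b, z)⟫ = a * b + ⟪y, z⟫` and norm `‖(a, y)‖ = ‖a * a + ⟪y, y⟫‖ ^ (1/2)`
(both provided by Mathlib).  For `x : V` and `lam : ℂ` with `|lam| = 1`, the operator
`M_{x,lam} : A ⊕ V → A ⊕ V`, `(a, y) ↦ (conj lam • ⟪x, y⟫, lam • (x <• a))` is encoded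
by a family `M` of continuous linear maps satisfying the predicate `IsM` below, and the
numerical radius is `numRadius M x = (1/2) * sup_{|lam| = 1} ‖M x lam‖`.
-/

open scoped RightActions InnerProductSpace

noncomputable section

variable {A V : Type*} [NonUnitalCStarAlgebra A] [PartialOrder A] [StarOrderedRing A]
  [NormedAddCommGroup V] [Module ℂ V] [SMul A V] [CStarModule A V] [CompleteSpace V]

/-- The element of the Hilbert `A`-module `A ⊕ V` with components `a : A` and `y : V`. -/
def pairElem (a : A) (y : V) : WithCStarModule A (A × V) :=
  (WithCStarModule.equiv A (A × V)).symm (a, y)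

/-- `IsM M` asserts that for every `x : V` and every unimodular `lam : ℂ`, the continuous
linear map `M x lam` is the operator `M_{x,lam} : (a, y) ↦ (conj lam • ⟪x, y⟫, lam • (x <• a))`
on `A ⊕ V`. -/
def IsM (M : V → ℂ → (WithCStarModule A (A × V) →L[ℂ] WithCStarModule A (A × V))) : Prop :=
  ∀ (x : V) (lam : ℂ), ‖lam‖ = 1 → ∀ (a : A) (y : V),
    M x lam (pairElem a y) = pairElem ((starRingEnd ℂ) lam • ⟪x, y⟫_A) (lam • (a • x))

/-- The numerical radius `Ω(x) = (1/2) * sup_{|lam| = 1} ‖M_{x,lam}‖`. -/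
def numRadius (M : V → ℂ → (WithCStarModule A (A × V) →L[ℂ] WithCStarModule A (A × V)))
    (x : V) : ℝ :=
  (1 / 2) * sSup ((fun lam : ℂ => ‖M x lam‖) '' {lam : ℂ | ‖lam‖ = 1})

/-- `x <• 0 = 0`, from the inner product axioms alone. -/
lemma op_smul_zero' (x : V) : (0 : A) • x = 0 := by
  have h : ⟪(0 : A) • x, (0 : A) • x⟫_A = 0 := by
    rw [CStarModule.inner_op_smul_right, zero_mul]
  exact CStarModule.inner_self.mp h

/-- If `⟪y, y⟫ = star c * (⟪x, x⟫ * c)` then `‖y‖ ≤ ‖x‖ * ‖c‖`. -/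
lemma norm_le_of_inner_eq {x y : V} {c : A}
    (h : ⟪y, y⟫_A = c * (⟪x, x⟫_A * star c)) : ‖y‖ ≤ ‖x‖ * ‖c‖ := by
  have h2 : ‖y‖ ^ 2 ≤ (‖x‖ * ‖c‖) ^ 2 := by
    rw [CStarModule.norm_sq_eq A, h]
    calc ‖c * (⟪x, x⟫_A * star c)‖ ≤ ‖c‖ * ‖⟪x, x⟫_A * star c‖ := norm_mul_le _ _
      _ ≤ ‖c‖ * (‖⟪x, x⟫_A‖ * ‖star c‖) := by
          gcongr; exact norm_mul_le _ _
      _ = (‖x‖ * ‖c‖) ^ 2 := by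
          rw [norm_star, ← CStarModule.norm_sq_eq A]; ring
  have hx : (0:ℝ) ≤ ‖x‖ * ‖c‖ := by positivity
  nlinarith [norm_nonneg y]

lemma norm_op_smul_le' (x : V) (c : A) : ‖c • x‖ ≤ ‖x‖ * ‖c‖ := by
  refine norm_le_of_inner_eq ?_
  rw [CStarModule.inner_op_smul_left, CStarModule.inner_op_smul_right, mul_assoc]

lemma norm_diff_le' (x : V) (a : A) :
    ‖a • x - star a • x‖ ≤ ‖x‖ * ‖a - star a‖ := by
  refine norm_le_of_inner_eq ?_
  simp only [CStarModule.inner_sub_left, CStarModule.inner_sub_right,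
    CStarModule.inner_op_smul_left, CStarModule.inner_op_smul_right, star_sub, star_star]
  noncomm_ring

include A in
lemma norm_unit_smul (w : V) {lam : ℂ} (hl : ‖lam‖ = 1) : ‖lam • w‖ = ‖w‖ := by
  have hs : lam * star lam = 1 := by
    rw [Complex.star_def, Complex.mul_conj']
    norm_cast
    simp [Complex.sq_norm, Complex.normSq_eq_norm_sq, hl]
  rw [CStarModule.norm_eq_sqrt_norm_inner_self (A := A),
    CStarModule.inner_smul_right_complex, CStarModule.inner_smul_left_complex,
    smul_smul, hs, one_smul, ← CStarModule.norm_eq_sqrt_norm_inner_self (A := A)]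

lemma opnorm_le (M : V → ℂ → (WithCStarModule A (A × V) →L[ℂ] WithCStarModule A (A × V)))
    (hM : IsM M) (x : V) (lam : ℂ) (hl : ‖lam‖ = 1) : ‖M x lam‖ ≤ 2 * ‖x‖ := by
  refine ContinuousLinearMap.opNorm_le_bound _ (by positivity) fun v => ?_
  have hv : v = pairElem v.1 v.2 := rfl
  rw [hv, hM x lam hl v.1 v.2]
  have h1 : ‖v.1‖ ≤ ‖v‖ := le_trans (le_max_left _ _) (WithCStarModule.max_le_prod_norm v)
  have h2 : ‖v.2‖ ≤ ‖v‖ := le_trans (le_max_right _ _) (WithCStarModule.max_le_prod_norm v)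
  calc ‖pairElem ((starRingEnd ℂ) lam • ⟪x, v.2⟫_A) (lam • (v.1 • x))‖
      ≤ ‖(starRingEnd ℂ) lam • ⟪x, v.2⟫_A‖ + ‖lam • (v.1 • x)‖ :=
        WithCStarModule.prod_norm_le_norm_add _
    _ = ‖⟪x, v.2⟫_A‖ + ‖v.1 • x‖ := by
        rw [norm_smul, norm_unit_smul (A := A) _ hl, RingHomIsometric.norm_map, hl, one_mul]
    _ ≤ ‖x‖ * ‖v.2‖ + ‖x‖ * ‖v.1‖ :=
        add_le_add (CStarModule.norm_inner_le V) (norm_op_smul_le' x v.1)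
    _ ≤ ‖x‖ * ‖v‖ + ‖x‖ * ‖v‖ := by gcongr
    _ = 2 * ‖x‖ * ‖v‖ := by ring

lemma norm_pair_left (b : A) : ‖pairElem b (0 : V)‖ = ‖b‖ := by
  have h : ‖pairElem b (0 : V)‖ ^ 2 = ‖b‖ ^ 2 := by
    rw [WithCStarModule.prod_norm_sq]
    show ‖b * star b + ⟪(0:V), (0:V)⟫_A‖ = ‖b‖ ^ 2
    rw [CStarModule.inner_zero_right, add_zero, CStarRing.norm_self_mul_star, pow_two]
  rw [← Real.sqrt_sq (norm_nonneg _), h, Real.sqrt_sq (norm_nonneg _)]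

lemma norm_pair_right (w : V) : ‖pairElem (0 : A) w‖ = ‖w‖ := by
  have h : ‖pairElem (0 : A) w‖ ^ 2 = ‖w‖ ^ 2 := by
    rw [WithCStarModule.prod_norm_sq]
    show ‖(0:A) * star 0 + ⟪w, w⟫_A‖ = ‖w‖ ^ 2
    rw [star_zero, zero_mul, zero_add, CStarModule.norm_sq_eq A]
  rw [← Real.sqrt_sq (norm_nonneg _), h, Real.sqrt_sq (norm_nonneg _)]

lemma le_opnorm (M : V → ℂ → (WithCStarModule A (A × V) →L[ℂ] WithCStarModule A (A × V)))
    (hM : IsM M) (x : V) : ‖x‖ ≤ ‖M x 1‖ := by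
  rcases eq_or_ne x 0 with rfl | hx
  · simp only [norm_zero]; exact norm_nonneg (M 0 1)
  have h := hM x 1 (by simp) 0 x
  rw [op_smul_zero' x, smul_zero, map_one, one_smul] at h
  have key : ‖M x 1 (pairElem (0:A) x)‖ ≤ ‖M x 1‖ * ‖pairElem (0:A) x‖ :=
    ContinuousLinearMap.le_opNorm _ _
  rw [h, norm_pair_left, norm_pair_right] at key
  have hxx : ‖⟪x, x⟫_A‖ = ‖x‖ ^ 2 := (CStarModule.norm_sq_eq A).symm
  have hxpos : 0 < ‖x‖ := norm_pos_iff.mpr hx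
  rw [hxx, pow_two] at key
  exact le_of_mul_le_mul_right key hxpos

theorem stmt11 (M : V → ℂ → (WithCStarModule A (A × V) →L[ℂ] WithCStarModule A (A × V))) (hM : IsM M) (a : A) (x : V) :
    numRadius M (a • x - star a • x) ≤ 2 * ‖a - star a‖ * numRadius M x := by
  set S : V → Set ℝ := fun z => (fun lam : ℂ => ‖M z lam‖) '' {lam : ℂ | ‖lam‖ = 1}
  have hmem : ∀ z : V, ‖M z 1‖ ∈ S z := fun z => ⟨1, by simp, rfl⟩
  have hub : ∀ z : V, sSup (S z) ≤ 2 * ‖z‖ := by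
    intro z
    refine csSup_le ⟨_, hmem z⟩ ?_
    rintro - ⟨lam, hl, rfl⟩
    exact opnorm_le M hM z lam hl
  have hbdd : ∀ z : V, BddAbove (S z) := by
    intro z
    refine ⟨2 * ‖z‖, ?_⟩
    rintro - ⟨lam, hl, rfl⟩
    exact opnorm_le M hM z lam hl
  have hlb : ∀ z : V, ‖z‖ ≤ sSup (S z) := fun z =>
    le_trans (le_opnorm M hM z) (le_csSup (hbdd z) (hmem z))
  have h3 : ‖a • x - star a • x‖ ≤ ‖x‖ * ‖a - star a‖ := norm_diff_le' x a
  have h4 : sSup (S (a • x - star a • x)) ≤ 2 * (‖x‖ * ‖a - star a‖) := by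
    calc sSup (S (a • x - star a • x)) ≤ 2 * ‖a • x - star a • x‖ := hub _
      _ ≤ 2 * (‖x‖ * ‖a - star a‖) := by linarith
  have h5 : ‖x‖ ≤ sSup (S x) := hlb x
  show (1 / 2) * sSup (S (a • x - star a • x)) ≤ 2 * ‖a - star a‖ * ((1 / 2) * sSup (S x))
  nlinarith [norm_nonneg (a - star a), norm_nonneg x,
    mul_le_mul_of_nonneg_right h5 (norm_nonneg (a - star a))]
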